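/- Any two geometric triangulations of the same set have a common refinement: if K and L are finite geometric simplicial complexes in ℝⁿ with the same underlying space S, then there exists a finite geometric simplicial complex M in ℝⁿ with underlying space S such that the convex hull of every face of K, and the convex hull of every face of L, is a union of convex hulls of faces of M. -/

import Mathlib

open Finset Set Geometry

namespace CommonRefinement

variable {E : Type*} [AddCommGroup E] [Module ℝ E] [DecidableEq E]

/-- Convex hull membership via weights that vanish off the finset. -/
lemma mem_hull_iff (u : Finset E) (x : E) :
    x ∈ convexHull ℝ (↑u : Set E) ↔ ∃ g : E → ℝ, (∀ y, 0 ≤ g y) ∧ (∀ y, y ∉ u → g y = 0) ∧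
      ∑ y ∈ u, g y = 1 ∧ ∑ y ∈ u, g y • y = x := by
  rw [Finset.mem_convexHull']
  constructor
  · rintro ⟨g, h0, h1, h2⟩
    refine ⟨fun y => if y ∈ u then g y else 0, fun y => ?_, fun y hy => if_neg hy, ?_, ?_⟩
    · by_cases hy : y ∈ u
      · simpa [hy] using h0 y hy
      · simp [hy]
    · rw [← h1]; exact Finset.sum_congr rfl fun y hy => if_pos hy
    · rw [← h2]; exact Finset.sum_congr rfl fun y hy => by simp [if_pos hy]
  · rintro ⟨g, h0, _, h1, h2⟩
    exact ⟨g, fun y _ => h0 y, h1, h2⟩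

lemma affine_apply_comb (f : E →ᵃ[ℝ] ℝ) {u : Finset E} {g : E → ℝ}
    (h1 : ∑ y ∈ u, g y = 1) :
    f (∑ y ∈ u, g y • y) = ∑ y ∈ u, g y * f y := by
  have h := Finset.map_affineCombination (k := ℝ) (s := u) (id : E → E) g h1 f
  rw [Finset.affineCombination_eq_linear_combination _ _ _ h1] at h
  simp only [id_eq] at h
  rw [h, Finset.affineCombination_eq_linear_combination _ _ _ h1]
  simp [smul_eq_mul]

variable [FiniteDimensional ℝ E]

/-- Replacing a vertex of an affinely independent set by an interior point of an edge keeps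
affine independence. -/
lemma indep_insert_segment {t : Finset E}
    (ht : AffineIndependent ℝ ((↑) : t → E)) {p q w : E} (hp : p ∈ t) (hq : q ∈ t)
    (hpq : p ≠ q) {r : ℝ} (hr0 : 0 < r) (hr1 : r < 1) (hw : w = (1 - r) • p + r • q)
    (hwt : w ∉ t) :
    AffineIndependent ℝ ((↑) : (insert w (t.erase p) : Finset E) → E) := by
  have hq' : q ∈ t.erase p := Finset.mem_erase.2 ⟨fun h => hpq h.symm, hq⟩
  have hwe : w ∉ t.erase p := fun h => hwt (Finset.mem_of_mem_erase h)
  set u : Finset E := insert w (t.erase p) with hu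
  have hcard : u.card = t.card := by
    rw [hu, Finset.card_insert_of_notMem hwe, Finset.card_erase_of_mem hp]
    have : 1 ≤ t.card := Finset.card_pos.2 ⟨p, hp⟩
    omega
  have hr1' : (1 : ℝ) - r ≠ 0 := by linarith
  have hwspan : w ∈ affineSpan ℝ (↑t : Set E) := by
    have : w ∈ convexHull ℝ (↑t : Set E) := by
      have hseg : w ∈ segment ℝ p q :=
        ⟨1 - r, r, by linarith, le_of_lt hr0, by ring, hw.symm⟩
      have : segment ℝ p q ⊆ convexHull ℝ (↑t : Set E) := by
        rw [← convexHull_pair]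
        exact convexHull_mono (by simp [Set.insert_subset_iff, hp, hq])
      exact this hseg
    exact convexHull_subset_affineSpan _ this
  have hspan : affineSpan ℝ (↑u : Set E) = affineSpan ℝ (↑t : Set E) := by
    apply le_antisymm
    · rw [affineSpan_le]
      intro y hy
      rw [hu] at hy
      simp only [Finset.coe_insert, Set.mem_insert_iff] at hy
      rcases hy with rfl | hy
      · exact hwspan
      · exact subset_affineSpan ℝ _ (Finset.mem_coe.2 (Finset.mem_of_mem_erase hy))
    · rw [affineSpan_le]
      intro y hy
      rcases eq_or_ne y p with rfl | hyp
      · have hline : AffineMap.lineMap q w ((1 - r)⁻¹ : ℝ) ∈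
            affineSpan ℝ ({q, w} : Set E) := AffineMap.lineMap_mem_affineSpan_pair _ _ _
        have hval : AffineMap.lineMap q w ((1 - r)⁻¹ : ℝ) = y := by
          rw [AffineMap.lineMap_apply_module', hw]
          have hc : (1 - r) • y + r • q - q = (1 - r) • (y - q) := by module
          rw [hc, smul_smul, inv_mul_cancel₀ hr1', one_smul]
          abel
        rw [← hval]
        refine SetLike.le_def.1 (affineSpan_mono ℝ ?_) hline
        rw [hu]
        simp only [Finset.coe_insert, Set.insert_subset_iff, Set.singleton_subset_iff]
        exact ⟨Set.mem_insert_of_mem _ (Finset.mem_coe.2 hq'), Set.mem_insert _ _⟩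
      · refine subset_affineSpan ℝ _ ?_
        rw [hu]
        simp only [Finset.coe_insert, Set.mem_insert_iff, Finset.mem_coe, Finset.mem_erase]
        exact Or.inr ⟨hyp, Finset.mem_coe.1 hy⟩
  have hrank : Module.finrank ℝ (vectorSpan ℝ (↑u : Set E)) =
      Module.finrank ℝ (vectorSpan ℝ (↑t : Set E)) := by
    rw [← direction_affineSpan, ← direction_affineSpan, hspan]
  have hcard1 : Fintype.card ↥t = (t.card - 1) + 1 := by
    rw [Fintype.card_coe]
    have : 1 ≤ t.card := Finset.card_pos.2 ⟨p, hp⟩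
    omega
  have hcard2 : Fintype.card ↥u = (t.card - 1) + 1 := by
    have : 1 ≤ t.card := Finset.card_pos.2 ⟨p, hp⟩
    rw [Fintype.card_coe, hcard]; omega
  have hrt := (affineIndependent_iff_finrank_vectorSpan_eq ℝ ((↑) : t → E) hcard1).1 ht
  rw [affineIndependent_iff_finrank_vectorSpan_eq ℝ ((↑) : u → E) hcard2]
  have hrange : Set.range ((↑) : u → E) = (↑u : Set E) := Subtype.range_coe
  have hranget : Set.range ((↑) : t → E) = (↑t : Set E) := Subtype.range_coe
  rw [hrange, hrank, ← hranget]
  exact hrt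

lemma half_mem {t : Finset E} {p q w : E} (hp : p ∈ t) (hq : q ∈ t)
    (hpq : p ≠ q) {r : ℝ} (hr0 : 0 < r) (hr1 : r < 1) (hw : w = (1 - r) • p + r • q)
    (hwt : w ∉ t) {x : E} {g : E → ℝ} (hg0 : ∀ y, 0 ≤ g y)
    (hg1 : ∑ y ∈ t, g y = 1) (hg2 : ∑ y ∈ t, g y • y = x)
    (hle : g p / (1 - r) ≤ g q / r) :
    x ∈ convexHull ℝ (↑(insert w (t.erase p)) : Set E) := by
  have hr1' : (0 : ℝ) < 1 - r := by linarith
  have hwe : w ∉ t.erase p := fun h => hwt (Finset.mem_of_mem_erase h)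
  have hq' : q ∈ t.erase p := Finset.mem_erase.2 ⟨fun h => hpq h.symm, hq⟩
  set α : ℝ := g p / (1 - r) with hα
  have hα0 : 0 ≤ α := div_nonneg (hg0 p) (le_of_lt hr1')
  have hαr : α * (1 - r) = g p := div_mul_cancel₀ _ (ne_of_gt hr1')
  have hgq : α * r ≤ g q := by
    have := mul_le_mul_of_nonneg_right hle (le_of_lt hr0)
    rwa [div_mul_cancel₀ _ (ne_of_gt hr0)] at this
  set g' : E → ℝ := fun y => if y = w then α else g y - (if y = q then α * r else 0) with hg'
  have hg'w : g' w = α := by simp [hg']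
  have hg'e : ∀ y ∈ t.erase p, g' y = g y - (if y = q then α * r else 0) := by
    intro y hy
    have hyw : y ≠ w := fun h => hwe (h ▸ hy)
    simp [hg', hyw]
  rw [Finset.mem_convexHull']
  refine ⟨g', ?_, ?_, ?_⟩
  · intro y hy
    rcases Finset.mem_insert.1 hy with rfl | hy'
    · rw [hg'w]; exact hα0
    · rw [hg'e y hy']
      by_cases hyq : y = q
      · rw [if_pos hyq, hyq]; linarith
      · rw [if_neg hyq, sub_zero]; exact hg0 y
  · rw [Finset.sum_insert hwe, Finset.sum_congr rfl hg'e, Finset.sum_sub_distrib,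
      Finset.sum_ite_eq' _ q _, if_pos hq', hg'w]
    have h2 : ∑ y ∈ t.erase p, g y = 1 - g p := by
      have := Finset.sum_erase_add t g hp
      linarith
    rw [h2]; linarith [hαr]
  · have h1 : ∀ y ∈ t.erase p, g' y • y = g y • y - (if y = q then (α * r) • q else 0) := by
      intro y hy
      rw [hg'e y hy]
      by_cases hyq : y = q
      · subst hyq; rw [if_pos rfl, if_pos rfl, sub_smul]
      · rw [if_neg hyq, if_neg hyq, sub_zero, sub_zero]
    rw [Finset.sum_insert hwe, Finset.sum_congr rfl h1, Finset.sum_sub_distrib,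
      Finset.sum_ite_eq' _ q _, if_pos hq']
    have h2 : ∑ y ∈ t.erase p, g y • y = x - g p • p := by
      have := Finset.sum_erase_add t (fun y => g y • y) hp
      rw [hg2] at this
      rw [← this]; abel
    have h3 : g' w • w = g p • p + (α * r) • q := by
      rw [hg'w, hw, smul_add, smul_smul, smul_smul, hαr]
    rw [h3, h2]
    abel

/-- Splitting a simplex along an interior point of one of its edges. -/
lemma hull_subset_union_halves {t : Finset E} {p q w : E} (hp : p ∈ t) (hq : q ∈ t)
    (hpq : p ≠ q) {r : ℝ} (hr0 : 0 < r) (hr1 : r < 1) (hw : w = (1 - r) • p + r • q)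
    (hwt : w ∉ t) :
    convexHull ℝ (↑t : Set E) ⊆
      convexHull ℝ (↑(insert w (t.erase p)) : Set E) ∪
        convexHull ℝ (↑(insert w (t.erase q)) : Set E) := by
  intro x hx
  rw [Finset.mem_convexHull'] at hx
  obtain ⟨g, hg0', hg1, hg2⟩ := hx
  set g : E → ℝ := fun y => if y ∈ t then g y else 0 with hgdef
  have hg0 : ∀ y, 0 ≤ g y := by
    intro y; by_cases hy : y ∈ t
    · simpa [hgdef, hy] using hg0' y hy
    · simp [hgdef, hy]
  have hg1 : ∑ y ∈ t, g y = 1 := by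
    rw [← hg1]; exact Finset.sum_congr rfl fun y hy => by simp [hgdef, hy]
  have hg2 : ∑ y ∈ t, g y • y = x := by
    rw [← hg2]; exact Finset.sum_congr rfl fun y hy => by simp [hgdef, hy]
  rcases le_total (g p / (1 - r)) (g q / r) with hle | hle
  · exact Or.inl (half_mem hp hq hpq hr0 hr1 hw hwt hg0 hg1 hg2 hle)
  · refine Or.inr (half_mem hq hp (Ne.symm hpq) (by linarith : (0:ℝ) < 1 - r)
      (by linarith : 1 - r < 1) ?_ hwt hg0 hg1 hg2 ?_)
    · rw [sub_sub_cancel, hw]; abel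
    · rw [sub_sub_cancel]; exact hle

/-- Folding the weight of `w` back onto `p` and `q`. -/
noncomputable def foldW (s : Finset E) (p q : E) (r : ℝ) (w : E) (lam : E → ℝ) : E → ℝ :=
  fun y => (if y ∈ s then lam y else 0) +
    lam w * ((if y = p then 1 - r else 0) + (if y = q then r else 0))

lemma foldW_nonneg {s : Finset E} {p q : E} {r : ℝ} (hr0 : 0 < r) (hr1 : r < 1) {w : E}
    {lam : E → ℝ} (h0 : ∀ y, 0 ≤ lam y) (y : E) : 0 ≤ foldW s p q r w lam y := by
  unfold foldW
  have h1 : (0:ℝ) ≤ if y ∈ s then lam y else 0 := by split <;> [exact h0 y; rfl]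
  have h2 : (0:ℝ) ≤ (if y = p then 1 - r else 0) + (if y = q then r else 0) := by
    have : (0:ℝ) ≤ if y = p then 1 - r else 0 := by split <;> [linarith; rfl]
    have : (0:ℝ) ≤ if y = q then r else 0 := by split <;> [linarith; rfl]
    linarith
  have := mul_nonneg (h0 w) h2
  linarith

lemma foldW_sum {s : Finset E} {p q : E} (hpq : p ≠ q) {r : ℝ} {w : E}
    (hws : w ∉ s) (hwp : w ≠ p) (hwq : w ≠ q) {lam : E → ℝ} :
    ∑ y ∈ s ∪ {p, q}, foldW s p q r w lam y = ∑ y ∈ insert w s, lam y := by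
  unfold foldW
  rw [Finset.sum_add_distrib, Finset.sum_insert hws]
  have h1 : ∑ y ∈ s ∪ {p, q}, (if y ∈ s then lam y else 0) = ∑ y ∈ s, lam y := by
    rw [← Finset.sum_subset Finset.subset_union_left (fun y _ hy => if_neg hy)]
    exact Finset.sum_congr rfl fun y hy => if_pos hy
  have hp : p ∈ s ∪ ({p, q} : Finset E) := Finset.mem_union_right _ (by simp)
  have hq : q ∈ s ∪ ({p, q} : Finset E) := Finset.mem_union_right _ (by simp)
  have h2 : ∑ y ∈ s ∪ {p, q}, lam w * ((if y = p then 1 - r else 0) + (if y = q then r else 0))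
      = lam w := by
    simp_rw [mul_add, Finset.sum_add_distrib, mul_ite, mul_zero]
    rw [Finset.sum_ite_eq' _ p _, Finset.sum_ite_eq' _ q _, if_pos hp, if_pos hq]
    ring
  rw [h1, h2]
  ring

lemma foldW_sum_smul {s : Finset E} {p q : E} (hpq : p ≠ q) {r : ℝ} {w : E}
    (hw : w = (1 - r) • p + r • q) (hws : w ∉ s) {lam : E → ℝ} :
    ∑ y ∈ s ∪ {p, q}, foldW s p q r w lam y • y = ∑ y ∈ insert w s, lam y • y := by
  unfold foldW
  simp_rw [add_smul, Finset.sum_add_distrib, Finset.sum_insert hws]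
  have h1 : ∑ y ∈ s ∪ {p, q}, (if y ∈ s then lam y else 0) • y = ∑ y ∈ s, lam y • y := by
    have : ∀ y ∈ s ∪ ({p,q} : Finset E), (if y ∈ s then lam y else 0) • y
        = (if y ∈ s then lam y • y else 0) := by
      intro y _; split <;> simp
    rw [Finset.sum_congr rfl this,
      ← Finset.sum_subset Finset.subset_union_left (fun y _ hy => if_neg hy)]
    exact Finset.sum_congr rfl fun y hy => if_pos hy
  have hp : p ∈ s ∪ ({p, q} : Finset E) := Finset.mem_union_right _ (by simp)
  have hq : q ∈ s ∪ ({p, q} : Finset E) := Finset.mem_union_right _ (by simp)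
  have h2 : ∑ y ∈ s ∪ {p, q}, (lam w * ((if y = p then 1 - r else 0) + (if y = q then r else 0))) • y
      = lam w • w := by
    have : ∀ y ∈ s ∪ ({p,q} : Finset E),
        (lam w * ((if y = p then 1 - r else 0) + (if y = q then r else 0))) • y
        = (if y = p then (lam w * (1 - r)) • y else 0) + (if y = q then (lam w * r) • y else 0) := by
      intro y _
      rcases eq_or_ne y p with rfl | hyp
      · simp [hpq, mul_add]
      · rcases eq_or_ne y q with rfl | hyq
        · simp [Ne.symm hpq, hyp, mul_add]
        · simp [hyp, hyq]
    rw [Finset.sum_congr rfl this, Finset.sum_add_distrib,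
      Finset.sum_ite_eq' _ p _, Finset.sum_ite_eq' _ q _, if_pos hp, if_pos hq, hw]
    rw [smul_add, smul_smul, smul_smul]
  rw [h1, h2]
  abel

lemma pair_subset_iff {p q : E} {t : Finset E} :
    ({p, q} : Finset E) ⊆ t ↔ p ∈ t ∧ q ∈ t := by
  rw [Finset.insert_subset_iff, Finset.singleton_subset_iff]

lemma w_mem_hull_pair {p q w : E} {r : ℝ} (hr0 : 0 < r) (hr1 : r < 1)
    (hw : w = (1 - r) • p + r • q) : w ∈ convexHull ℝ ({p, q} : Set E) := by
  rw [convexHull_pair]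
  exact ⟨1 - r, r, by linarith, le_of_lt hr0, by ring, hw.symm⟩

lemma hull_new_subset {p q w : E} {r : ℝ} (hr0 : 0 < r) (hr1 : r < 1)
    (hw : w = (1 - r) • p + r • q) (s : Finset E) :
    convexHull ℝ (↑(insert w s) : Set E) ⊆ convexHull ℝ (↑(s ∪ {p, q}) : Set E) := by
  apply convexHull_min _ (convex_convexHull _ _)
  intro y hy
  rw [Finset.coe_insert] at hy
  rcases hy with rfl | hy
  · refine convexHull_mono ?_ (w_mem_hull_pair hr0 hr1 hw)
    intro z hz
    rcases hz with rfl | hz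
    · exact Finset.mem_coe.2 (Finset.mem_union_right _ (by simp))
    · rcases hz with rfl
      exact Finset.mem_coe.2 (Finset.mem_union_right _ (by simp))
  · exact subset_convexHull _ _ (Finset.mem_coe.2 (Finset.mem_union_left _ (Finset.mem_coe.1 hy)))

lemma inter_old_new (M : SimplicialComplex ℝ E) {p q : E} (hpq : p ≠ q) {r : ℝ}
    (hr0 : 0 < r) (hr1 : r < 1) {w : E} (hw : w = (1 - r) • p + r • q)
    (hwface : ∀ t ∈ M.faces, w ∉ t)
    {t₁ s : Finset E} (ht₁ : t₁ ∈ M.faces) (he₁ : ¬({p, q} : Finset E) ⊆ t₁)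
    (hS : s ∪ {p, q} ∈ M.faces) :
    convexHull ℝ (↑t₁ : Set E) ∩ convexHull ℝ (↑(insert w s) : Set E) ⊆
      convexHull ℝ ((↑t₁ : Set E) ∩ ↑(insert w s)) := by
  intro x hx
  obtain ⟨hx₁, hx₂⟩ := hx
  have hwS := hwface _ hS
  have hws : w ∉ s := fun h => hwS (Finset.mem_union_left _ h)
  have hwp : w ≠ p := fun h => hwS (Finset.mem_union_right _ (by simp [h]))
  have hwq : w ≠ q := fun h => hwS (Finset.mem_union_right _ (by simp [h]))
  have hpe : p ∈ s ∪ ({p, q} : Finset E) := Finset.mem_union_right _ (by simp)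
  have hqe : q ∈ s ∪ ({p, q} : Finset E) := Finset.mem_union_right _ (by simp)
  have hxS : x ∈ convexHull ℝ (↑(t₁ ∩ (s ∪ {p, q})) : Set E) := by
    have := M.inter_subset_convexHull ht₁ hS ⟨hx₁, hull_new_subset hr0 hr1 hw s hx₂⟩
    rwa [← Finset.coe_inter] at this
  obtain ⟨c, hc0, hcv, hc1, hc2⟩ := (mem_hull_iff _ _).1 hxS
  obtain ⟨lam, hl0, hlv, hl1, hl2⟩ := (mem_hull_iff _ _).1 hx₂
  have hcu : ∀ y, y ∉ t₁ → c y = 0 := fun y hy =>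
    hcv y (fun h => hy (Finset.mem_of_mem_inter_left h))
  have hfold1 : ∑ y ∈ s ∪ {p, q}, foldW s p q r w lam y = ∑ y ∈ s ∪ {p, q}, c y := by
    rw [foldW_sum hpq hws hwp hwq, hl1, ← hc1]
    exact Finset.sum_subset Finset.inter_subset_right fun y _ hyu => hcv y hyu
  have hfold2 : ∑ y ∈ s ∪ {p, q}, foldW s p q r w lam y • y = ∑ y ∈ s ∪ {p, q}, c y • y := by
    rw [foldW_sum_smul hpq hw hws, hl2, ← hc2]
    refine Finset.sum_subset Finset.inter_subset_right fun y _ hyu => ?_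
    rw [hcv y hyu, zero_smul]
  have heq : ∀ y ∈ s ∪ {p, q}, foldW s p q r w lam y = c y :=
    (M.indep hS).eq_of_sum_eq_sum_subtype hfold1 hfold2
  obtain ⟨a, hae, hat⟩ : ∃ a, (a = p ∨ a = q) ∧ a ∉ t₁ := by
    by_contra h
    push_neg at h
    exact he₁ (pair_subset_iff.2 ⟨h p (Or.inl rfl), h q (Or.inr rfl)⟩)
  have haS : a ∈ s ∪ ({p, q} : Finset E) := by rcases hae with rfl | rfl; exacts [hpe, hqe]
  have hfa : (if a ∈ s then lam a else 0) +
      lam w * ((if a = p then 1 - r else 0) + (if a = q then r else 0)) = c a := by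
    have := heq a haS
    simpa only [foldW] using this
  have hκ : 0 < (if a = p then 1 - r else 0) + (if a = q then r else 0) := by
    rcases hae with rfl | rfl
    · rw [if_pos rfl, if_neg hpq]; linarith
    · rw [if_neg (Ne.symm hpq), if_pos rfl]; linarith
  have hlw : lam w = 0 := by
    have h1 : (0:ℝ) ≤ if a ∈ s then lam a else 0 := by split <;> [exact hl0 a; rfl]
    have h2 : (0:ℝ) ≤ lam w := hl0 w
    have hca : c a = 0 := hcu a hat
    nlinarith [hfa, hκ]
  have hvan : ∀ y ∈ s, y ∉ t₁ → lam y = 0 := by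
    intro y hys hyt
    have h := heq y (Finset.mem_union_left _ hys)
    simp only [foldW, if_pos hys, hlw, zero_mul, add_zero] at h
    rw [h]
    exact hcu y hyt
  have hfin : x ∈ convexHull ℝ (↑(t₁ ∩ insert w s) : Set E) := by
    rw [Finset.mem_convexHull']
    have hsub : t₁ ∩ insert w s ⊆ insert w s := Finset.inter_subset_right
    have hz : ∀ y ∈ insert w s, y ∉ t₁ ∩ insert w s → lam y = 0 := by
      intro y hy hyn
      have hyt : y ∉ t₁ := fun h => hyn (Finset.mem_inter.2 ⟨h, hy⟩)
      rcases Finset.mem_insert.1 hy with rfl | hy'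
      · exact hlw
      · exact hvan y hy' hyt
    refine ⟨lam, fun y _ => hl0 y, ?_, ?_⟩
    · rw [← hl1]
      exact Finset.sum_subset hsub (fun y hy hyn => hz y hy hyn)
    · rw [← hl2]
      exact Finset.sum_subset hsub (fun y hy hyn => by rw [hz y hy hyn, zero_smul])
  rwa [Finset.coe_inter] at hfin

lemma inter_new_new (M : SimplicialComplex ℝ E) {p q : E} (hpq : p ≠ q) {r : ℝ}
    (hr0 : 0 < r) (hr1 : r < 1) {w : E} (hw : w = (1 - r) • p + r • q)
    (hwface : ∀ t ∈ M.faces, w ∉ t)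
    {s₁ s₂ : Finset E} (hS₁ : s₁ ∪ {p, q} ∈ M.faces) (hne₁ : ¬({p, q} : Finset E) ⊆ s₁)
    (hS₂ : s₂ ∪ {p, q} ∈ M.faces) (hne₂ : ¬({p, q} : Finset E) ⊆ s₂) :
    convexHull ℝ (↑(insert w s₁) : Set E) ∩ convexHull ℝ (↑(insert w s₂) : Set E) ⊆
      convexHull ℝ ((↑(insert w s₁) : Set E) ∩ ↑(insert w s₂)) := by
  intro x hx
  obtain ⟨hx₁, hx₂⟩ := hx
  have hws₁ : w ∉ s₁ := fun h => hwface _ hS₁ (Finset.mem_union_left _ h)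
  have hws₂ : w ∉ s₂ := fun h => hwface _ hS₂ (Finset.mem_union_left _ h)
  have hwp : w ≠ p := fun h => hwface _ hS₁ (Finset.mem_union_right _ (by simp [h]))
  have hwq : w ≠ q := fun h => hwface _ hS₁ (Finset.mem_union_right _ (by simp [h]))
  set D : Finset E := (s₁ ∩ s₂) ∪ {p, q} with hD_def
  have hDsub₁ : D ⊆ s₁ ∪ {p, q} :=
    Finset.union_subset_union_left Finset.inter_subset_left
  have hDsub₂ : D ⊆ s₂ ∪ {p, q} :=
    Finset.union_subset_union_left Finset.inter_subset_right
  have hDeq : (s₁ ∪ {p, q}) ∩ (s₂ ∪ {p, q}) = D := (Finset.inter_union_distrib_right s₁ s₂ _).symm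
  have hxD : x ∈ convexHull ℝ (↑D : Set E) := by
    have := M.inter_subset_convexHull hS₁ hS₂
      ⟨hull_new_subset hr0 hr1 hw s₁ hx₁, hull_new_subset hr0 hr1 hw s₂ hx₂⟩
    rwa [← Finset.coe_inter, hDeq] at this
  obtain ⟨c, hc0, hcv, hc1, hc2⟩ := (mem_hull_iff _ _).1 hxD
  obtain ⟨lam₁, hl10, hl1v, hl11, hl12⟩ := (mem_hull_iff _ _).1 hx₁
  obtain ⟨lam₂, hl20, hl2v, hl21, hl22⟩ := (mem_hull_iff _ _).1 hx₂
  have heq₁ : ∀ y ∈ s₁ ∪ {p, q}, foldW s₁ p q r w lam₁ y = c y := by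
    apply (M.indep hS₁).eq_of_sum_eq_sum_subtype
    · rw [foldW_sum hpq hws₁ hwp hwq, hl11, ← hc1]
      exact Finset.sum_subset hDsub₁ fun y _ hy => hcv y hy
    · rw [foldW_sum_smul hpq hw hws₁, hl12, ← hc2]
      refine Finset.sum_subset hDsub₁ fun y _ hy => ?_
      rw [hcv y hy, zero_smul]
  have heq₂ : ∀ y ∈ s₂ ∪ {p, q}, foldW s₂ p q r w lam₂ y = c y := by
    apply (M.indep hS₂).eq_of_sum_eq_sum_subtype
    · rw [foldW_sum hpq hws₂ hwp hwq, hl21, ← hc1]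
      exact Finset.sum_subset hDsub₂ fun y _ hy => hcv y hy
    · rw [foldW_sum_smul hpq hw hws₂, hl22, ← hc2]
      refine Finset.sum_subset hDsub₂ fun y _ hy => ?_
      rw [hcv y hy, zero_smul]
  have hpe₁ : p ∈ s₁ ∪ ({p, q} : Finset E) := Finset.mem_union_right _ (by simp)
  have hqe₁ : q ∈ s₁ ∪ ({p, q} : Finset E) := Finset.mem_union_right _ (by simp)
  have hpe₂ : p ∈ s₂ ∪ ({p, q} : Finset E) := Finset.mem_union_right _ (by simp)
  have hqe₂ : q ∈ s₂ ∪ ({p, q} : Finset E) := Finset.mem_union_right _ (by simp)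
  have hp₁ : (if p ∈ s₁ then lam₁ p else 0) + lam₁ w * (1 - r) = c p := by
    have := heq₁ p hpe₁
    simpa only [foldW, if_pos rfl, if_neg hpq, add_zero, mul_comm, ↓reduceIte] using this
  have hq₁ : (if q ∈ s₁ then lam₁ q else 0) + lam₁ w * r = c q := by
    have := heq₁ q hqe₁
    simpa only [foldW, if_pos rfl, if_neg (Ne.symm hpq), zero_add, ↓reduceIte] using this
  have hp₂ : (if p ∈ s₂ then lam₂ p else 0) + lam₂ w * (1 - r) = c p := by
    have := heq₂ p hpe₂
    simpa only [foldW, if_pos rfl, if_neg hpq, add_zero, ↓reduceIte] using this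
  have hq₂ : (if q ∈ s₂ then lam₂ q else 0) + lam₂ w * r = c q := by
    have := heq₂ q hqe₂
    simpa only [foldW, if_pos rfl, if_neg (Ne.symm hpq), zero_add, ↓reduceIte] using this
  have hr1' : (0:ℝ) < 1 - r := by linarith
  have itep₁ : (0:ℝ) ≤ if p ∈ s₁ then lam₁ p else 0 := by split <;> [exact hl10 p; rfl]
  have iteq₁ : (0:ℝ) ≤ if q ∈ s₁ then lam₁ q else 0 := by split <;> [exact hl10 q; rfl]
  have itep₂ : (0:ℝ) ≤ if p ∈ s₂ then lam₂ p else 0 := by split <;> [exact hl20 p; rfl]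
  have iteq₂ : (0:ℝ) ≤ if q ∈ s₂ then lam₂ q else 0 := by split <;> [exact hl20 q; rfl]
  have hm : lam₁ w = lam₂ w := by
    rcases (by
      by_contra h
      push_neg at h
      exact hne₁ (pair_subset_iff.2 ⟨h.1, h.2⟩) : p ∉ s₁ ∨ q ∉ s₁) with h1 | h1 <;>
    rcases (by
      by_contra h
      push_neg at h
      exact hne₂ (pair_subset_iff.2 ⟨h.1, h.2⟩) : p ∉ s₂ ∨ q ∉ s₂) with h2 | h2
    · rw [if_neg h1] at hp₁; rw [if_neg h2] at hp₂
      have : lam₁ w * (1 - r) = lam₂ w * (1 - r) := by linarith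
      exact mul_right_cancel₀ (ne_of_gt hr1') this
    · rw [if_neg h1] at hp₁; rw [if_neg h2] at hq₂
      nlinarith [hp₁, hp₂, hq₁, hq₂, itep₂, iteq₁]
    · rw [if_neg h1] at hq₁; rw [if_neg h2] at hp₂
      nlinarith [hp₁, hp₂, hq₁, hq₂, itep₁, iteq₂]
    · rw [if_neg h1] at hq₁; rw [if_neg h2] at hq₂
      have : lam₁ w * r = lam₂ w * r := by linarith
      exact mul_right_cancel₀ (ne_of_gt hr0) this
  have hvan : ∀ y ∈ s₁, y ∉ s₂ → lam₁ y = 0 := by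
    intro y hy1 hy2
    rcases eq_or_ne y p with rfl | hyp
    · rw [if_pos hy1] at hp₁
      rw [if_neg hy2] at hp₂
      rw [hm] at hp₁
      linarith
    · rcases eq_or_ne y q with rfl | hyq
      · rw [if_pos hy1] at hq₁
        rw [if_neg hy2] at hq₂
        rw [hm] at hq₁
        linarith
      · have h := heq₁ y (Finset.mem_union_left _ hy1)
        simp only [foldW, if_pos hy1, if_neg hyp, if_neg hyq, add_zero, mul_zero] at h
        rw [h]
        apply hcv
        rw [hD_def]
        simp only [Finset.mem_union, Finset.mem_inter, Finset.mem_insert, Finset.mem_singleton]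
        push_neg
        exact ⟨fun _ => hy2, hyp, hyq⟩
  have hfin : x ∈ convexHull ℝ (↑(insert w (s₁ ∩ s₂)) : Set E) := by
    rw [Finset.mem_convexHull']
    have hsub : insert w (s₁ ∩ s₂) ⊆ insert w s₁ :=
      Finset.insert_subset_insert _ Finset.inter_subset_left
    have hz : ∀ y ∈ insert w s₁, y ∉ insert w (s₁ ∩ s₂) → lam₁ y = 0 := by
      intro y hy hyn
      rcases Finset.mem_insert.1 hy with rfl | hy'
      · exact absurd (Finset.mem_insert_self _ _) hyn
      · have : y ∉ s₂ := fun h =>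
          hyn (Finset.mem_insert_of_mem (Finset.mem_inter.2 ⟨hy', h⟩))
        exact hvan y hy' this
    refine ⟨lam₁, fun y _ => hl10 y, ?_, ?_⟩
    · rw [← hl11]
      exact Finset.sum_subset hsub hz
    · rw [← hl12]
      exact Finset.sum_subset hsub (fun y hy hyn => by rw [hz y hy hyn, zero_smul])
  refine convexHull_mono ?_ hfin
  intro z hz
  rw [Finset.coe_insert] at hz
  rcases hz with rfl | hz
  · exact ⟨by simp, by simp⟩
  · have hz' := Finset.mem_coe.1 hz
    exact ⟨by simp [Finset.mem_inter.1 hz' |>.1], by simp [Finset.mem_inter.1 hz' |>.2]⟩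

/-- Stellar subdivision of an edge `{p,q}` at an interior point `w`. -/
lemma stellar_subdivision (M : SimplicialComplex ℝ E) {p q : E} (hpq : p ≠ q)
    (he : {p, q} ∈ M.faces) {r : ℝ} (hr0 : 0 < r) (hr1 : r < 1) {w : E}
    (hw : w = (1 - r) • p + r • q) :
    ∃ M' : SimplicialComplex ℝ E,
      M'.faces = {t | t ∈ M.faces ∧ ¬({p, q} ⊆ t)} ∪
        {t | ∃ s : Finset E, t = insert w s ∧ s ∪ {p, q} ∈ M.faces ∧ ¬({p, q} ⊆ s)} ∧
      M'.space = M.space ∧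
      (∀ t' ∈ M'.faces, ∃ t ∈ M.faces, convexHull ℝ (↑t' : Set E) ⊆ convexHull ℝ ↑t) := by
  have hwface : ∀ t ∈ M.faces, w ∉ t := by
    intro t ht hwt
    have hwv : {w} ∈ M.faces :=
      M.down_closed ht (Finset.singleton_subset_iff.2 hwt) (by simp)
    have hwp : w ≠ p := by
      intro h
      apply hpq
      have key : w - p = r • (q - p) := by rw [hw]; module
      rw [h, sub_self] at key
      have := (smul_eq_zero.1 key.symm).resolve_left (ne_of_gt hr0)
      exact (sub_eq_zero.1 this).symm
    have hwq : w ≠ q := by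
      intro h
      apply hpq
      have key : w - q = (1 - r) • (p - q) := by rw [hw]; module
      rw [h, sub_self] at key
      have := (smul_eq_zero.1 key.symm).resolve_left (by intro h'; linarith [h'] : (1:ℝ) - r ≠ 0)
      exact sub_eq_zero.1 this
    have hmem : w ∈ convexHull ℝ (↑({w} : Finset E) : Set E) ∩
        convexHull ℝ (↑({p, q} : Finset E) : Set E) := by
      constructor
      · exact subset_convexHull _ _ (by simp)
      · have := w_mem_hull_pair hr0 hr1 hw
        simpa using this
    have := M.inter_subset_convexHull hwv he hmem
    rw [← Finset.coe_inter] at this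
    have hint : ({w} : Finset E) ∩ {p, q} = ∅ := by
      rw [Finset.eq_empty_iff_forall_notMem]
      intro y hy
      obtain ⟨hy1, hy2⟩ := Finset.mem_inter.1 hy
      rcases Finset.mem_singleton.1 hy1 with rfl
      rcases Finset.mem_insert.1 hy2 with h | h
      · exact hwp h
      · exact hwq (Finset.mem_singleton.1 h)
    rw [hint] at this
    simpa using this
  have hwp : w ≠ p := fun h => hwface _ he (by simp [← h])
  have hwq : w ≠ q := fun h => hwface _ he (by simp [← h])
  -- the new faces
  set F : Set (Finset E) := {t | t ∈ M.faces ∧ ¬({p, q} ⊆ t)} ∪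
      {t | ∃ s : Finset E, t = insert w s ∧ s ∪ {p, q} ∈ M.faces ∧ ¬({p, q} ⊆ s)} with hF
  have hindep : ∀ t ∈ F, AffineIndependent ℝ ((↑) : t → E) := by
    rintro t (⟨ht, -⟩ | ⟨s, rfl, hS, hne⟩)
    · exact M.indep ht
    · have hws : w ∉ s ∪ ({p, q} : Finset E) := hwface _ hS
      have hps : p ∈ s ∪ ({p, q} : Finset E) := Finset.mem_union_right _ (by simp)
      have hqs : q ∈ s ∪ ({p, q} : Finset E) := Finset.mem_union_right _ (by simp)
      have hcase : p ∉ s ∨ q ∉ s := by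
        by_contra h
        push_neg at h
        exact hne (pair_subset_iff.2 h)
      rcases hcase with hps' | hqs'
      · have hbig := indep_insert_segment (M.indep hS) hps hqs hpq hr0 hr1 hw hws
        have hsub : (insert w s : Finset E) ⊆ insert w ((s ∪ {p, q}).erase p) := by
          apply Finset.insert_subset_insert
          intro y hy
          exact Finset.mem_erase.2 ⟨fun h => hps' (h ▸ hy), Finset.mem_union_left _ hy⟩
        exact hbig.mono (by exact_mod_cast hsub)
      · have hw' : w = (1 - (1 - r)) • q + (1 - r) • p := by
          rw [sub_sub_cancel, hw]; abel
        have hS' : s ∪ ({q, p} : Finset E) ∈ M.faces := by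
          rwa [Finset.pair_comm q p]
        have hbig := indep_insert_segment (M.indep hS')
          (Finset.mem_union_right _ (by simp) : q ∈ s ∪ ({q, p} : Finset E))
          (Finset.mem_union_right _ (by simp) : p ∈ s ∪ ({q, p} : Finset E))
          (Ne.symm hpq) (by linarith) (by linarith) hw'
          (by rwa [Finset.pair_comm q p])
        have hsub : (insert w s : Finset E) ⊆ insert w ((s ∪ {q, p}).erase q) := by
          apply Finset.insert_subset_insert
          intro y hy
          exact Finset.mem_erase.2 ⟨fun h => hqs' (h ▸ hy), Finset.mem_union_left _ hy⟩
        exact hbig.mono (by exact_mod_cast hsub)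
  have hdown : ∀ ⦃t u : Finset E⦄, t ∈ F → u ⊆ t → u ≠ ∅ → u ∈ F := by
    rintro t u (⟨ht, hne⟩ | ⟨s, rfl, hS, hne⟩) hut hu
    · exact Or.inl ⟨M.down_closed ht hut (Finset.nonempty_iff_ne_empty.2 hu), fun h => hne (h.trans hut)⟩
    · by_cases hwu : w ∈ u
      · refine Or.inr ⟨u.erase w, ?_, ?_, ?_⟩
        · rw [Finset.insert_erase hwu]
        · apply M.down_closed hS
          · apply Finset.union_subset_union_left
            intro y hy
            obtain ⟨hyw, hyu⟩ := Finset.mem_erase.1 hy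
            rcases Finset.mem_insert.1 (hut hyu) with h | h
            · exact absurd h hyw
            · exact h
          · exact ⟨p, Finset.mem_union_right _ (by simp)⟩
        · intro h
          apply hne
          intro y hy
          obtain ⟨-, hy2⟩ := Finset.mem_erase.1 (h hy)
          rcases Finset.mem_insert.1 (hut hy2) with h' | h'
          · exfalso
            rcases Finset.mem_insert.1 hy with rfl | hy'
            · exact hwp h'.symm
            · rw [Finset.mem_singleton] at hy'
              subst hy'
              exact hwq h'.symm
          · exact h'
      · have hus : u ⊆ s := by
          intro y hy
          rcases Finset.mem_insert.1 (hut hy) with rfl | h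
          · exact absurd hy hwu
          · exact h
        refine Or.inl ⟨M.down_closed hS (hus.trans (Finset.subset_union_left)) (Finset.nonempty_iff_ne_empty.2 hu),
          fun h => hne (h.trans hus)⟩
  have hinter : ∀ ⦃t u : Finset E⦄, t ∈ F → u ∈ F →
      convexHull ℝ (↑t : Set E) ∩ convexHull ℝ ↑u ⊆ convexHull ℝ (↑t ∩ ↑u : Set E) := by
    rintro t u (⟨ht, hnet⟩ | ⟨s, rfl, hS, hnes⟩) (⟨hu, hneu⟩ | ⟨s', rfl, hS', hnes'⟩)
    · exact M.inter_subset_convexHull ht hu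
    · exact inter_old_new M hpq hr0 hr1 hw hwface ht hnet hS'
    · intro x hx
      have := inter_old_new M hpq hr0 hr1 hw hwface hu hneu hS ⟨hx.2, hx.1⟩
      rw [Set.inter_comm]
      exact this
    · exact inter_new_new M hpq hr0 hr1 hw hwface hS hnes hS' hnes'
  have hnonempty : ∅ ∉ F := by
    rintro (⟨h, -⟩ | ⟨s, h, -, -⟩)
    · exact M.empty_notMem h
    · exact (Finset.insert_ne_empty _ _) h.symm
  refine ⟨⟨⟨F, fun t ht => ⟨Finset.nonempty_iff_ne_empty.2 (fun h => hnonempty (h ▸ ht)),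
    fun u hut hu => hdown ht hut hu.ne_empty⟩⟩, fun {t} ht => hindep t ht,
    fun {t u} ht hu => hinter ht hu⟩, rfl, ?_, ?_⟩
  · -- space equality
    apply Set.Subset.antisymm
    · apply Set.iUnion₂_subset
      rintro t (⟨ht, -⟩ | ⟨s, rfl, hS, -⟩)
      · exact SimplicialComplex.convexHull_subset_space ht
      · exact (hull_new_subset hr0 hr1 hw s).trans (SimplicialComplex.convexHull_subset_space hS)
    · apply Set.iUnion₂_subset
      intro t ht
      by_cases het : ({p, q} : Finset E) ⊆ t
      · have hpt : p ∈ t := het (by simp)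
        have hqt : q ∈ t := het (by simp)
        have hwt : w ∉ t := hwface t ht
        refine (hull_subset_union_halves hpt hqt hpq hr0 hr1 hw hwt).trans ?_
        apply Set.union_subset
        · have hface : (insert w (t.erase p) : Finset E) ∈ F := by
            refine Or.inr ⟨t.erase p, rfl, ?_, ?_⟩
            · have : t.erase p ∪ ({p, q} : Finset E) = t := by
                ext y
                simp only [Finset.mem_union, Finset.mem_erase, Finset.mem_insert,
                  Finset.mem_singleton]
                constructor
                · rintro (⟨-, h⟩ | rfl | rfl) <;> [exact h; exact hpt; exact hqt]
                · intro hy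
                  rcases eq_or_ne y p with rfl | hyp
                  · exact Or.inr (Or.inl rfl)
                  · exact Or.inl ⟨hyp, hy⟩
              rw [this]
              exact ht
            · intro h
              exact (Finset.notMem_erase p t) (h (by simp))
          exact SimplicialComplex.convexHull_subset_space hface
        · have hface : (insert w (t.erase q) : Finset E) ∈ F := by
            refine Or.inr ⟨t.erase q, rfl, ?_, ?_⟩
            · have : t.erase q ∪ ({p, q} : Finset E) = t := by
                ext y
                simp only [Finset.mem_union, Finset.mem_erase, Finset.mem_insert,
                  Finset.mem_singleton]
                constructor
                · rintro (⟨-, h⟩ | rfl | rfl) <;> [exact h; exact hpt; exact hqt]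
                · intro hy
                  rcases eq_or_ne y q with rfl | hyq
                  · exact Or.inr (Or.inr rfl)
                  · exact Or.inl ⟨hyq, hy⟩
              rw [this]
              exact ht
            · intro h
              exact (Finset.notMem_erase q t) (h (by simp))
          exact SimplicialComplex.convexHull_subset_space hface
      · exact SimplicialComplex.convexHull_subset_space (Or.inl ⟨ht, het⟩ : t ∈ F)
  · -- hull-sub property
    rintro t' (⟨ht, -⟩ | ⟨s, rfl, hS, -⟩)
    · exact ⟨t', ht, subset_rfl⟩
    · exact ⟨s ∪ {p, q}, hS, hull_new_subset hr0 hr1 hw s⟩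

/-- The set of ordered pairs of vertices of a common face lying strictly on either side of the
hyperplane `f = c`. -/
def cross (f : E →ᵃ[ℝ] ℝ) (c : ℝ) (M : SimplicialComplex ℝ E) : Set (E × E) :=
  {z | ∃ t ∈ M.faces, z.1 ∈ t ∧ z.2 ∈ t ∧ f z.1 < c ∧ c < f z.2}

lemma split_one (f : E →ᵃ[ℝ] ℝ) (c : ℝ) : ∀ (N : ℕ) (M : SimplicialComplex ℝ E),
    M.faces.Finite → (cross f c M).ncard ≤ N →
    ∃ M' : SimplicialComplex ℝ E, M'.faces.Finite ∧ M'.space = M.space ∧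
      (∀ t' ∈ M'.faces, ∃ t ∈ M.faces, convexHull ℝ (↑t' : Set E) ⊆ convexHull ℝ ↑t) ∧
      (∀ t' ∈ M'.faces, convexHull ℝ (↑t' : Set E) ⊆ {x | f x ≤ c} ∨
        convexHull ℝ (↑t' : Set E) ⊆ {x | c ≤ f x}) := by
  intro N
  induction N with
  | zero =>
    intro M hM hcard
    have hfin : (cross f c M).Finite := by
      have hV : (⋃ t ∈ M.faces, (↑t : Set E)).Finite :=
        Set.Finite.biUnion hM fun t _ => t.finite_toSet
      apply Set.Finite.subset (hV.prod hV)
      rintro ⟨a, b⟩ ⟨t, ht, ha, hb, -, -⟩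
      exact ⟨Set.mem_biUnion ht ha, Set.mem_biUnion ht hb⟩
    have hempty : cross f c M = ∅ := by
      rw [← Set.ncard_eq_zero hfin]
      omega
    refine ⟨M, hM, rfl, fun t' ht' => ⟨t', ht', subset_rfl⟩, fun t' ht' => ?_⟩
    have hside : (∀ y ∈ t', f y ≤ c) ∨ (∀ y ∈ t', c ≤ f y) := by
      by_contra h
      push_neg at h
      obtain ⟨⟨y₁, hy₁, hfy₁⟩, y₂, hy₂, hfy₂⟩ := h
      have : (y₂, y₁) ∈ cross f c M := ⟨t', ht', hy₂, hy₁, hfy₂, hfy₁⟩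
      rw [hempty] at this
      exact this
    rcases hside with h | h
    · left
      apply convexHull_min _ ((convex_Iic c).affine_preimage f)
      intro y hy
      exact h y (Finset.mem_coe.1 hy)
    · right
      apply convexHull_min _ ((convex_Ici c).affine_preimage f)
      intro y hy
      exact h y (Finset.mem_coe.1 hy)
  | succ N ih =>
    intro M hM hcard
    have hfin : (cross f c M).Finite := by
      have hV : (⋃ t ∈ M.faces, (↑t : Set E)).Finite :=
        Set.Finite.biUnion hM fun t _ => t.finite_toSet
      apply Set.Finite.subset (hV.prod hV)
      rintro ⟨a, b⟩ ⟨t, ht, ha, hb, -, -⟩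
      exact ⟨Set.mem_biUnion ht ha, Set.mem_biUnion ht hb⟩
    by_cases hc : cross f c M = ∅
    · have : (cross f c M).ncard ≤ 0 := by rw [hc]; simp
      exact ih M hM (by omega)
    · obtain ⟨⟨a, b⟩, hab⟩ := Set.nonempty_iff_ne_empty.2 hc
      obtain ⟨t₀, ht₀, hat, hbt, hfa, hfb⟩ := hab
      have hfab : f a < f b := lt_trans hfa hfb
      have hd : (0:ℝ) < f b - f a := by linarith
      have hab_ne : a ≠ b := fun h => by rw [h] at hfab; exact lt_irrefl _ hfab
      have he : ({a, b} : Finset E) ∈ M.faces := by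
        apply M.down_closed ht₀ (pair_subset_iff.2 ⟨hat, hbt⟩)
        simp
      set r : ℝ := (c - f a) / (f b - f a) with hr_def
      have hr0 : 0 < r := div_pos (by linarith) hd
      have hr1 : r < 1 := (div_lt_one hd).2 (by linarith)
      set w : E := (1 - r) • a + r • b with hw_def
      have hfw : f w = c := by
        rw [hw_def]
        rw [Convex.combo_affine_apply (by ring : (1 - r) + r = 1)]
        have : r * (f b - f a) = c - f a := div_mul_cancel₀ _ (ne_of_gt hd)
        simp only [smul_eq_mul]
        nlinarith [this]
      obtain ⟨M₁, hM₁faces, hM₁space, hM₁sub⟩ :=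
        stellar_subdivision M hab_ne he hr0 hr1 hw_def
      have hM₁fin : M₁.faces.Finite := by
        rw [hM₁faces]
        apply Set.Finite.union
        · exact hM.subset fun t ht => ht.1
        · have hfin2 : {s : Finset E | ∃ T ∈ M.faces, s ⊆ T}.Finite := by
            have : {s : Finset E | ∃ T ∈ M.faces, s ⊆ T} ⊆
                ⋃ T ∈ M.faces, (↑T.powerset : Set (Finset E)) := by
              rintro s ⟨T, hT, hsT⟩
              exact Set.mem_biUnion hT (by simpa using hsT)
            exact Set.Finite.subset
              (Set.Finite.biUnion hM fun T _ => T.powerset.finite_toSet) this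
          apply Set.Finite.subset (hfin2.image (fun s => insert w s))
          rintro t ⟨s, rfl, hS, -⟩
          exact ⟨s, ⟨s ∪ {a, b}, hS, Finset.subset_union_left⟩, rfl⟩
      have hwface : ∀ t ∈ M.faces, w ∉ t := by
        intro t ht hwt
        have hwv : {w} ∈ M.faces :=
          M.down_closed ht (Finset.singleton_subset_iff.2 hwt) (by simp)
        have hwa : w ≠ a := fun h => by
          rw [← h] at hfa; rw [hfw] at hfa; exact lt_irrefl _ hfa
        have hwb : w ≠ b := fun h => by
          rw [← h] at hfb; rw [hfw] at hfb; exact lt_irrefl _ hfb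
        have hmem : w ∈ convexHull ℝ (↑({w} : Finset E) : Set E) ∩
            convexHull ℝ (↑({a, b} : Finset E) : Set E) := by
          constructor
          · exact subset_convexHull _ _ (by simp)
          · have := w_mem_hull_pair hr0 hr1 hw_def
            simpa using this
        have h2 := M.inter_subset_convexHull hwv he hmem
        rw [← Finset.coe_inter] at h2
        have hint : ({w} : Finset E) ∩ {a, b} = ∅ := by
          rw [Finset.eq_empty_iff_forall_notMem]
          intro y hy
          obtain ⟨hy1, hy2⟩ := Finset.mem_inter.1 hy
          rcases Finset.mem_singleton.1 hy1 with rfl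
          rcases Finset.mem_insert.1 hy2 with h | h
          · exact hwa h
          · exact hwb (Finset.mem_singleton.1 h)
        rw [hint] at h2
        simpa using h2
      have hcross_sub : cross f c M₁ ⊆ cross f c M \ {(a, b)} := by
        rintro ⟨z₁, z₂⟩ ⟨t', ht', hz₁, hz₂, hfz₁, hfz₂⟩
        rw [hM₁faces] at ht'
        rcases ht' with ⟨ht', hne'⟩ | ⟨s, rfl, hS, hne'⟩
        · refine ⟨⟨t', ht', hz₁, hz₂, hfz₁, hfz₂⟩, ?_⟩
          intro h
          rw [Set.mem_singleton_iff, Prod.mk.injEq] at h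
          obtain ⟨rfl, rfl⟩ := h
          exact hne' (pair_subset_iff.2 ⟨hz₁, hz₂⟩)
        · have hz₁w : z₁ ≠ w := fun h => by
            rw [h, hfw] at hfz₁; exact lt_irrefl _ hfz₁
          have hz₂w : z₂ ≠ w := fun h => by
            rw [h, hfw] at hfz₂; exact lt_irrefl _ hfz₂
          have hz₁s : z₁ ∈ s := by
            rcases Finset.mem_insert.1 hz₁ with h | h; exacts [absurd h hz₁w, h]
          have hz₂s : z₂ ∈ s := by
            rcases Finset.mem_insert.1 hz₂ with h | h; exacts [absurd h hz₂w, h]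
          refine ⟨⟨s ∪ {a, b}, hS, Finset.mem_union_left _ hz₁s,
            Finset.mem_union_left _ hz₂s, hfz₁, hfz₂⟩, ?_⟩
          intro h
          rw [Set.mem_singleton_iff, Prod.mk.injEq] at h
          obtain ⟨rfl, rfl⟩ := h
          exact hne' (pair_subset_iff.2 ⟨hz₁s, hz₂s⟩)
      have hcard₁ : (cross f c M₁).ncard ≤ N := by
        have h1 : (cross f c M₁).ncard ≤ (cross f c M \ {(a, b)}).ncard :=
          Set.ncard_le_ncard hcross_sub hfin.diff
        have h2 : (cross f c M \ {(a, b)}).ncard < (cross f c M).ncard :=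
          Set.ncard_diff_singleton_lt_of_mem ⟨t₀, ht₀, hat, hbt, hfa, hfb⟩ hfin
        omega
      obtain ⟨M₂, hM₂fin, hM₂space, hM₂sub, hM₂split⟩ := ih M₁ hM₁fin hcard₁
      refine ⟨M₂, hM₂fin, hM₂space.trans hM₁space, ?_, hM₂split⟩
      intro t'' ht''
      obtain ⟨t', ht', hsub'⟩ := hM₂sub t'' ht''
      obtain ⟨t, ht, hsub⟩ := hM₁sub t' ht'
      exact ⟨t, ht, hsub'.trans hsub⟩

lemma multi_split_list (l : List (E →ᵃ[ℝ] ℝ)) :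
    ∀ (M : SimplicialComplex ℝ E), M.faces.Finite →
    ∃ M' : SimplicialComplex ℝ E, M'.faces.Finite ∧ M'.space = M.space ∧
      (∀ t' ∈ M'.faces, ∃ t ∈ M.faces, convexHull ℝ (↑t' : Set E) ⊆ convexHull ℝ ↑t) ∧
      (∀ t' ∈ M'.faces, ∀ f ∈ l, convexHull ℝ (↑t' : Set E) ⊆ {x | f x ≤ 0} ∨
        convexHull ℝ (↑t' : Set E) ⊆ {x | 0 ≤ f x}) := by
  induction l with
  | nil =>
    intro M hM
    exact ⟨M, hM, rfl, fun t' ht' => ⟨t', ht', subset_rfl⟩, fun t' _ f hf => absurd hf (by simp)⟩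
  | cons f l ihl =>
    intro M hM
    obtain ⟨M₁, hM₁fin, hM₁space, hM₁sub, hM₁split⟩ :=
      split_one f 0 (cross f 0 M).ncard M hM le_rfl
    obtain ⟨M₂, hM₂fin, hM₂space, hM₂sub, hM₂split⟩ := ihl M₁ hM₁fin
    refine ⟨M₂, hM₂fin, hM₂space.trans hM₁space, ?_, ?_⟩
    · intro t'' ht''
      obtain ⟨t', ht', hsub'⟩ := hM₂sub t'' ht''
      obtain ⟨t, ht, hsub⟩ := hM₁sub t' ht'
      exact ⟨t, ht, hsub'.trans hsub⟩
    · intro t'' ht'' g hg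
      rcases List.mem_cons.1 hg with rfl | hg'
      · obtain ⟨t', ht', hsub'⟩ := hM₂sub t'' ht''
        rcases hM₁split t' ht' with h | h
        · exact Or.inl (hsub'.trans h)
        · exact Or.inr (hsub'.trans h)
      · exact hM₂split t'' ht'' g hg'

lemma multi_split (H : Set (E →ᵃ[ℝ] ℝ)) (hH : H.Finite) :
    ∀ (M : SimplicialComplex ℝ E), M.faces.Finite →
    ∃ M' : SimplicialComplex ℝ E, M'.faces.Finite ∧ M'.space = M.space ∧
      (∀ t' ∈ M'.faces, ∃ t ∈ M.faces, convexHull ℝ (↑t' : Set E) ⊆ convexHull ℝ ↑t) ∧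
      (∀ t' ∈ M'.faces, ∀ f ∈ H, convexHull ℝ (↑t' : Set E) ⊆ {x | f x ≤ 0} ∨
        convexHull ℝ (↑t' : Set E) ⊆ {x | 0 ≤ f x}) := by
  intro M hM
  obtain ⟨M', h1, h2, h3, h4⟩ := multi_split_list hH.toFinset.toList M hM
  refine ⟨M', h1, h2, h3, fun t' ht' f hf => h4 t' ht' f ?_⟩
  rw [Finset.mem_toList, Set.Finite.mem_toFinset]
  exact hf

/-- A simplex is the intersection of finitely many affine half-spaces. -/
lemma simplex_constraints (u : Finset E)
    (hu : AffineIndependent ℝ ((↑) : u → E)) (hne : u.Nonempty) :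
    ∃ I : Set (E →ᵃ[ℝ] ℝ), I.Finite ∧
      ∀ x : E, x ∈ convexHull ℝ (↑u : Set E) ↔ ∀ f ∈ I, 0 ≤ f x := by
  classical
  obtain ⟨T, hsubT, hTind, hTspan⟩ :=
    exists_subset_affineIndependent_affineSpan_eq_top (s := (↑u : Set E)) hu
  have hTfin : T.Finite := finite_set_of_fin_dim_affineIndependent ℝ hTind
  haveI : Fintype ↥T := hTfin.fintype
  set b : AffineBasis ↥T ℝ E :=
    ⟨fun p => (p : E), hTind, by rwa [Subtype.range_coe]⟩ with hb_def
  have hb_coe : ∀ j : ↥T, b j = (j : E) := fun j => rfl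
  have hcoord_vertex : ∀ (i : ↥T) (y : E) (hy : y ∈ T), b.coord i y =
      if (i : E) = y then 1 else 0 := by
    intro i y hy
    have h1 : y = b ⟨y, hy⟩ := rfl
    rw [h1, AffineBasis.coord_apply]
    by_cases h : i = ⟨y, hy⟩
    · rw [if_pos h, if_pos (show (i : E) = b ⟨y, hy⟩ by rw [h]; rfl)]
    · rw [if_neg h, if_neg (show ¬((i : E) = b ⟨y, hy⟩) from fun hh => h (Subtype.ext hh))]
  refine ⟨{f | ∃ i : ↥T, f = b.coord i} ∪ {f | ∃ i : ↥T, (i : E) ∉ u ∧ f = -(b.coord i)},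
    ?_, ?_⟩
  · apply Set.Finite.union
    · have : {f | ∃ i : ↥T, f = b.coord i} = Set.range (fun i : ↥T => b.coord i) := by
        ext f; simp [eq_comm]
      rw [this]
      exact Set.finite_range _
    · apply Set.Finite.subset (Set.finite_range (fun i : ↥T => -(b.coord i)))
      rintro f ⟨i, -, rfl⟩
      exact ⟨i, rfl⟩
  · intro x
    constructor
    · intro hx f hf
      obtain ⟨g, hg0, hgv, hg1, hg2⟩ := (mem_hull_iff _ _).1 hx
      have hcoord_val : ∀ i : ↥T, b.coord i x = if (i : E) ∈ u then g (i : E) else 0 := by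
        intro i
        rw [← hg2, affine_apply_comb _ hg1]
        have : ∀ y ∈ u, g y * b.coord i y = if y = (i : E) then g y else 0 := by
          intro y hy
          rw [hcoord_vertex i y (hsubT (Finset.mem_coe.2 hy))]
          by_cases h : (i : E) = y
          · rw [if_pos h, if_pos h.symm, mul_one]
          · rw [if_neg h, if_neg (fun h' => h h'.symm), mul_zero]
        rw [Finset.sum_congr rfl this, Finset.sum_ite_eq' _ (i : E) g]
      rcases hf with ⟨i, rfl⟩ | ⟨i, hiu, rfl⟩
      · rw [hcoord_val i]
        split <;> [exact hg0 _; rfl]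
      · rw [show ((-(b.coord i)) x = -(b.coord i x)) from congrFun (AffineMap.coe_neg _) x,
          hcoord_val i, if_neg hiu, neg_zero]
    · intro hf
      have hpos : ∀ i : ↥T, 0 ≤ b.coord i x := fun i => hf _ (Or.inl ⟨i, rfl⟩)
      have hzero : ∀ i : ↥T, (i : E) ∉ u → b.coord i x = 0 := by
        intro i hiu
        have h1 := hf _ (Or.inr ⟨i, hiu, rfl⟩)
        rw [show ((-(b.coord i)) x = -(b.coord i x)) from congrFun (AffineMap.coe_neg _) x] at h1
        linarith [hpos i]
      set U : Finset ↥T := Finset.univ.filter (fun i : ↥T => (i : E) ∈ u) with hU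
      have hUsum : ∑ i ∈ U, b.coord i x = 1 := by
        rw [← b.sum_coord_apply_eq_one x]
        apply Finset.sum_subset (Finset.subset_univ U)
        intro i _ hiU
        apply hzero
        intro h
        exact hiU (Finset.mem_filter.2 ⟨Finset.mem_univ _, h⟩)
      have hx_eq : x = ∑ i ∈ U, b.coord i x • (i : E) := by
        have h1 := b.affineCombination_coord_eq_self x
        rw [Finset.affineCombination_eq_linear_combination _ _ _
          (b.sum_coord_apply_eq_one x)] at h1
        have h2 : ∑ i ∈ U, b.coord i x • b i = ∑ i : ↥T, b.coord i x • b i := by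
          apply Finset.sum_subset (Finset.subset_univ U)
          intro i _ hiU
          rw [hzero i (fun h => hiU (Finset.mem_filter.2 ⟨Finset.mem_univ _, h⟩)), zero_smul]
        calc x = ∑ i : ↥T, b.coord i x • b i := h1.symm
        _ = ∑ i ∈ U, b.coord i x • b i := h2.symm
        _ = ∑ i ∈ U, b.coord i x • (i : E) := rfl
      have := U.centerMass_mem_convexHull (w := fun i => b.coord i x)
        (z := fun i => (i : E)) (fun i _ => hpos i) (by rw [hUsum]; norm_num)
        (fun i hi => Finset.mem_coe.2 ((Finset.mem_filter.1 hi).2))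
      rwa [Finset.centerMass_eq_of_sum_1 _ _ hUsum, ← hx_eq] at this

/-- Key covering property: a complex whose faces are split along all defining halfspaces of a
simplex, and whose space contains the simplex, covers the simplex by faces. -/
lemma covers (M : SimplicialComplex ℝ E) (u : Finset E)
    (hu : AffineIndependent ℝ ((↑) : u → E)) (hne : u.Nonempty)
    (I : Set (E →ᵃ[ℝ] ℝ))
    (hchar : ∀ x : E, x ∈ convexHull ℝ (↑u : Set E) ↔ ∀ f ∈ I, 0 ≤ f x)
    (hsub : convexHull ℝ (↑u : Set E) ⊆ M.space)
    (hsplit : ∀ t' ∈ M.faces, ∀ f ∈ I, convexHull ℝ (↑t' : Set E) ⊆ {x | f x ≤ 0} ∨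
        convexHull ℝ (↑t' : Set E) ⊆ {x | 0 ≤ f x}) :
    convexHull ℝ (↑u : Set E) =
      ⋃ t ∈ {t ∈ M.faces | convexHull ℝ (↑t : Set E) ⊆ convexHull ℝ (↑u : Set E)},
        convexHull ℝ (↑t : Set E) := by
  classical
  apply Set.Subset.antisymm
  · intro x hx
    have hxS : x ∈ M.space := hsub hx
    rw [SimplicialComplex.mem_space_iff] at hxS
    obtain ⟨t, ht, hxt⟩ := hxS
    obtain ⟨g, hg0', hg1, hg2⟩ := Finset.mem_convexHull'.1 hxt
    set t' : Finset E := t.filter (fun y => 0 < g y) with ht'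
    have ht'sub : t' ⊆ t := Finset.filter_subset _ _
    have hvanish : ∀ y ∈ t, y ∉ t' → g y = 0 := by
      intro y hy hyn
      have : ¬0 < g y := fun h => hyn (Finset.mem_filter.2 ⟨hy, h⟩)
      linarith [hg0' y hy]
    have hg1' : ∑ y ∈ t', g y = 1 := by
      rw [← hg1]
      exact Finset.sum_subset ht'sub hvanish
    have hg2' : ∑ y ∈ t', g y • y = x := by
      rw [← hg2]
      exact Finset.sum_subset ht'sub (fun y hy hyn => by rw [hvanish y hy hyn, zero_smul])
    have ht'ne : t' ≠ ∅ := by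
      intro h
      rw [h, Finset.sum_empty] at hg1'
      norm_num at hg1'
    have ht'face : t' ∈ M.faces := M.down_closed ht ht'sub (Finset.nonempty_iff_ne_empty.2 ht'ne)
    have hxt' : x ∈ convexHull ℝ (↑t' : Set E) :=
      Finset.mem_convexHull'.2 ⟨g, fun y hy => hg0' y (ht'sub hy), hg1', hg2'⟩
    have hvert : ∀ y ∈ t', ∀ f ∈ I, 0 ≤ f y := by
      intro y hy f hfI
      have hfx : 0 ≤ f x := (hchar x).1 hx f hfI
      rcases hsplit t' ht'face f hfI with hle | hge
      · have hfx' : f x = ∑ z ∈ t', g z * f z := by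
          rw [← hg2', affine_apply_comb f hg1']
        have hterm : ∀ z ∈ t', g z * f z ≤ 0 := fun z hz =>
          mul_nonpos_of_nonneg_of_nonpos (hg0' z (ht'sub hz))
            (hle (subset_convexHull _ _ (Finset.mem_coe.2 hz)))
        have hsum0 : ∑ z ∈ t', g z * f z = 0 := by
          have h1 : ∑ z ∈ t', g z * f z ≤ 0 := Finset.sum_nonpos hterm
          linarith [hfx' ▸ hfx]
        have hzero := (Finset.sum_eq_zero_iff_of_nonpos hterm).1 hsum0 y hy
        have hgy : 0 < g y := (Finset.mem_filter.1 hy).2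
        have : f y = 0 := by
          rcases mul_eq_zero.1 hzero with h | h
          · exact absurd h (ne_of_gt hgy)
          · exact h
        linarith
      · exact hge (subset_convexHull _ _ (Finset.mem_coe.2 hy))
    have ht'hull : convexHull ℝ (↑t' : Set E) ⊆ convexHull ℝ (↑u : Set E) := by
      apply convexHull_min _ (convex_convexHull _ _)
      intro y hy
      exact (hchar y).2 (hvert y (Finset.mem_coe.1 hy))
    exact Set.mem_biUnion (⟨ht'face, ht'hull⟩ : t' ∈ {t ∈ M.faces |
      convexHull ℝ (↑t : Set E) ⊆ convexHull ℝ (↑u : Set E)}) hxt'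
  · exact Set.iUnion₂_subset fun t ht => ht.2

end CommonRefinement

/-- **Common refinement of geometric triangulations**: if two finite geometric simplicial
complexes `K` and `L` in `ℝⁿ` have the same underlying space `S`, then there is a finite
geometric simplicial complex `M` with underlying space `S` such that the convex hull of every
face of `K`, and of every face of `L`, is a union of convex hulls of faces of `M`. -/
theorem triangulations_common_refinement (n : ℕ)
    (K L : Geometry.SimplicialComplex ℝ (Fin n → ℝ))
    (hK : K.faces.Finite) (hL : L.faces.Finite) (S : Set (Fin n → ℝ))
    (hKS : K.space = S) (hLS : L.space = S) :
    ∃ M : Geometry.SimplicialComplex ℝ (Fin n → ℝ), M.faces.Finite ∧ M.space = S ∧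
      (∀ s ∈ K.faces, ∃ T ⊆ M.faces,
        convexHull ℝ (s : Set (Fin n → ℝ)) = ⋃ t ∈ T, convexHull ℝ (t : Set (Fin n → ℝ))) ∧
      (∀ s ∈ L.faces, ∃ T ⊆ M.faces,
        convexHull ℝ (s : Set (Fin n → ℝ)) = ⋃ t ∈ T, convexHull ℝ (t : Set (Fin n → ℝ))) := by
  classical
  have hne : ∀ u ∈ K.faces ∪ L.faces, u.Nonempty := by
    intro u hu
    rw [Finset.nonempty_iff_ne_empty]
    rintro rfl
    rcases hu with hu | hu
    · exact K.empty_notMem hu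
    · exact L.empty_notMem hu
  have hindep : ∀ u ∈ K.faces ∪ L.faces, AffineIndependent ℝ ((↑) : u → (Fin n → ℝ)) := by
    intro u hu
    rcases hu with hu | hu
    · exact K.indep hu
    · exact L.indep hu
  have hI : ∀ u ∈ K.faces ∪ L.faces, ∃ I : Set ((Fin n → ℝ) →ᵃ[ℝ] ℝ), I.Finite ∧
      ∀ x : Fin n → ℝ, x ∈ convexHull ℝ (↑u : Set (Fin n → ℝ)) ↔ ∀ f ∈ I, 0 ≤ f x := fun u hu =>
    CommonRefinement.simplex_constraints u (hindep u hu) (hne u hu)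
  choose I hIfin hIchar using hI
  set H : Set ((Fin n → ℝ) →ᵃ[ℝ] ℝ) := ⋃ (u : Finset (Fin n → ℝ)) (h : u ∈ K.faces ∪ L.faces), I u h with hH
  have hHfin : H.Finite := by
    rw [hH]
    exact Set.Finite.biUnion' (hK.union hL) fun u hu => hIfin u hu
  obtain ⟨M, hMfin, hMspace, hMsub, hMsplit⟩ := CommonRefinement.multi_split H hHfin K hK
  have hMS : M.space = S := hMspace.trans hKS
  refine ⟨M, hMfin, hMS, ?_, ?_⟩
  · intro u hu
    have hu' : u ∈ K.faces ∪ L.faces := Or.inl hu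
    refine ⟨{t ∈ M.faces | convexHull ℝ (↑t : Set (Fin n → ℝ)) ⊆ convexHull ℝ (↑u : Set (Fin n → ℝ))},
      fun t ht => ht.1, ?_⟩
    apply CommonRefinement.covers M u (hindep u hu') (hne u hu') (I u hu') (hIchar u hu')
    · rw [hMS, ← hKS]
      exact Geometry.SimplicialComplex.convexHull_subset_space hu
    · intro t ht f hf
      exact hMsplit t ht f (by
        rw [hH]
        exact Set.mem_iUnion.2 ⟨u, Set.mem_iUnion.2 ⟨hu', hf⟩⟩)
  · intro u hu
    have hu' : u ∈ K.faces ∪ L.faces := Or.inr hu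
    refine ⟨{t ∈ M.faces | convexHull ℝ (↑t : Set (Fin n → ℝ)) ⊆ convexHull ℝ (↑u : Set (Fin n → ℝ))},
      fun t ht => ht.1, ?_⟩
    apply CommonRefinement.covers M u (hindep u hu') (hne u hu') (I u hu') (hIchar u hu')
    · rw [hMS, ← hLS]
      exact Geometry.SimplicialComplex.convexHull_subset_space hu
    · intro t ht f hf
      exact hMsplit t ht f (by
        rw [hH]
        exact Set.mem_iUnion.2 ⟨u, Set.mem_iUnion.2 ⟨hu', hf⟩⟩)
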